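/- Let A be a commutative ring, let n ≥ 1, let a be a function assigning an element a_f ∈ A to each edge f of the complete graph K_{n+1}, and let e_0 be an edge of K_{n+1}. Then Φ_n((c_{e_0})_* a) = Σ_{T ∈ T_{n+1}^{e_0}} ( T_*(a + 1_{e_0}) − T_*(a) ), where T_{n+1}^{e_0} denotes the set of spanning trees of K_{n+1} containing the edge e_0. -/

import Mathlib

/-- The product `T_*(a) = ∏_{f edge of T} a_f` associated to a (spanning sub)graph `T`
of the complete graph on `Fin n` and a function `a` on edges. -/
noncomputable def treeProd {n : ℕ} {A : Type*} [CommRing A]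
    (T : SimpleGraph (Fin n)) (a : Sym2 (Fin n) → A) : A :=
  ∏ᶠ f ∈ T.edgeSet, a f

/-- The `n`-th forested form `Φ_n(a) = Σ_{T spanning tree of K_n} T_*(a)`. -/
noncomputable def forestedForm (n : ℕ) {A : Type*} [CommRing A]
    (a : Sym2 (Fin n) → A) : A :=
  ∑ᶠ (T : SimpleGraph (Fin n)) (_ : T.IsTree), treeProd T a

/-- The pushforward `(c_{e₀})_* a`: the value on an edge `g` of `K_n` is the sum of `a_f`
over the edges `f ≠ e₀` of `K_{n+1}` contracting onto `g`. -/
noncomputable def pushforward {n : ℕ} {A : Type*} [CommRing A]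
    (q : Fin (n + 1) → Fin n) (e₀ : Sym2 (Fin (n + 1)))
    (a : Sym2 (Fin (n + 1)) → A) : Sym2 (Fin n) → A :=
  fun g => ∑ᶠ f ∈ {f : Sym2 (Fin (n + 1)) | ¬ f.IsDiag ∧ f ≠ e₀ ∧ Sym2.map q f = g}, a f

/-- The function `1_{e₀}`, equal to `1` on the edge `e₀` and `0` elsewhere. -/
def edgeIndicator {n : ℕ} {A : Type*} [CommRing A] (e₀ : Sym2 (Fin n)) :
    Sym2 (Fin n) → A :=
  fun f => if f = e₀ then 1 else 0


open SimpleGraph Finset Function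


private lemma reach_del {V : Type*} {G : SimpleGraph V} {x y : V}
    (hr : (G.deleteEdges {s(x, y)}).Reachable x y) {c d : V} (p : G.Walk c d) :
    (G.deleteEdges {s(x, y)}).Reachable c d := by
  induction p with
  | nil => exact Reachable.refl _
  | @cons c c' d h p ih =>
    refine Reachable.trans ?_ ih
    by_cases he : s(c, c') = s(x, y)
    · rw [Sym2.eq_iff] at he
      rcases he with ⟨rfl, rfl⟩ | ⟨rfl, rfl⟩
      · exact hr
      · exact hr.symm
    · exact Adj.reachable (by simp [deleteEdges_adj, h, he])

private lemma cycle_delete {V : Type*} {G : SimpleGraph V} (hG : G.Connected)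
    (hac : ¬ G.IsAcyclic) :
    ∃ e ∈ G.edgeSet, (G.deleteEdges {e}).Connected := by
  rw [isAcyclic_iff_forall_adj_isBridge] at hac
  push_neg at hac
  obtain ⟨x, y, hadj, hbr⟩ := hac
  rw [isBridge_iff] at hbr
  push_neg at hbr
  have hr : (G.deleteEdges {s(x, y)}).Reachable x y := hbr
  haveI := hG.nonempty
  exact ⟨s(x, y), hadj, Connected.mk fun c d => reach_del hr (hG.preconnected c d).some⟩


private lemma card_le_of_connected {V : Type*} [Fintype V] :
    ∀ (k : ℕ) (G : SimpleGraph V), G.edgeSet.ncard = k → G.Connected →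
      Fintype.card V ≤ k + 1 := by
  intro k
  induction k using Nat.strong_induction_on with
  | _ k ih =>
    intro G hk hG
    by_cases hac : G.IsAcyclic
    · have ht : G.IsTree := ⟨hG, hac⟩
      haveI : Fintype G.edgeSet := Fintype.ofFinite _
      have := ht.card_edgeFinset
      rw [← this, edgeFinset, ← Set.ncard_eq_toFinset_card', hk]
    · obtain ⟨e, he, hconn⟩ := cycle_delete hG hac
      have h1 : 1 ≤ k := by
        rw [← hk]
        exact (Set.ncard_pos (G.edgeSet.toFinite)).mpr ⟨e, he⟩
      have hcard : (G.deleteEdges {e}).edgeSet.ncard = k - 1 := by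
        rw [edgeSet_deleteEdges, Set.ncard_diff_singleton_of_mem he, hk]
      have := ih (k - 1) (by omega) _ hcard hconn
      omega

private lemma isTree_of_conn_card {V : Type*} [Fintype V] {G : SimpleGraph V}
    (hG : G.Connected) (hc : G.edgeSet.ncard + 1 = Fintype.card V) : G.IsTree := by
  refine ⟨hG, ?_⟩
  by_contra hac
  obtain ⟨e, he, hconn⟩ := cycle_delete hG hac
  have h1 : 1 ≤ G.edgeSet.ncard :=
    (Set.ncard_pos (G.edgeSet.toFinite)).mpr ⟨e, he⟩
  have hcard : (G.deleteEdges {e}).edgeSet.ncard = G.edgeSet.ncard - 1 := by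
    rw [edgeSet_deleteEdges, Set.ncard_diff_singleton_of_mem he]
  have := card_le_of_connected _ _ hcard hconn
  omega

private lemma ncard_of_isTree {V : Type*} [Fintype V] {G : SimpleGraph V}
    (h : G.IsTree) : G.edgeSet.ncard + 1 = Fintype.card V := by
  haveI : Fintype G.edgeSet := Fintype.ofFinite _
  have := h.card_edgeFinset
  rwa [edgeFinset, ← Set.ncard_eq_toFinset_card'] at this


private lemma no_triangle {V : Type*} {T : SimpleGraph V} (hT : T.IsAcyclic)
    {x y z : V} (h1 : T.Adj y x) (h2 : T.Adj x z) (h3 : T.Adj y z) : False := by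
  have hP1 : (Walk.cons h3 Walk.nil : T.Walk y z).IsPath := by
    simp [Walk.isPath_def, h3.ne]
  have hP2 : (Walk.cons h1 (Walk.cons h2 Walk.nil) : T.Walk y z).IsPath := by
    simp [Walk.isPath_def, h1.ne, h2.ne, h3.ne, Ne.symm h1.ne]
  have := hT.path_unique ⟨_, hP1⟩ ⟨_, hP2⟩
  have hlen := congrArg (fun p => SimpleGraph.Walk.length p.1) this
  simp [Walk.length_cons] at hlen

section
variable {n : ℕ} {u v : Fin (n + 1)} {q : Fin (n + 1) → Fin n}

private lemma map_injOn (huv : u ≠ v)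
    (hinj : ∀ x y : Fin (n + 1), q x = q y → x = y ∨ s(x, y) = s(u, v))
    {T : SimpleGraph (Fin (n + 1))} (hT : T.IsAcyclic) (he : s(u, v) ∈ T.edgeSet) :
    Set.InjOn (Sym2.map q) (T.edgeSet \ {s(u, v)}) := by
  -- helper: ordered version
  have key : ∀ x y x' y' : Fin (n + 1),
      s(x, y) ∈ T.edgeSet \ {s(u, v)} → s(x', y') ∈ T.edgeSet \ {s(u, v)} →
      q x = q x' → q y = q y' → s(x, y) = s(x', y') := by
    intro x y x' y' hf hf' hx hy
    obtain ⟨hfe, hfne⟩ := hf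
    obtain ⟨hfe', hfne'⟩ := hf'
    rw [Set.mem_singleton_iff] at hfne hfne'
    rw [mem_edgeSet] at hfe hfe'
    rcases hinj _ _ hx with rfl | hxx
    · rcases hinj _ _ hy with rfl | hyy
      · rfl
      · -- {y,y'} = {u,v}; triangle x y y'
        have huvT : T.Adj y y' := T.mem_edgeSet.mp (by rw [hyy]; exact he)
        exact absurd (no_triangle hT hfe.symm hfe' huvT) id
    · rcases hinj _ _ hy with rfl | hyy
      · -- {x,x'} = {u,v}; triangle
        have huvT : T.Adj x x' := T.mem_edgeSet.mp (by rw [hxx]; exact he)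
        exact absurd (no_triangle hT huvT.symm hfe hfe') id
      · -- both pairs equal {u,v}: then f has both endpoints in {u,v}, so f = e₀
        exfalso
        have hxmem : x = u ∨ x = v := by
          rcases Sym2.eq_iff.mp hxx with ⟨rfl, _⟩ | ⟨rfl, _⟩
          · exact Or.inl rfl
          · exact Or.inr rfl
        have hymem : y = u ∨ y = v := by
          rcases Sym2.eq_iff.mp hyy with ⟨rfl, _⟩ | ⟨rfl, _⟩
          · exact Or.inl rfl
          · exact Or.inr rfl
        have hxy : x ≠ y := hfe.ne
        apply hfne
        rcases hxmem with rfl | rfl <;> rcases hymem with rfl | rfl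
        · exact absurd rfl hxy
        · rfl
        · exact Sym2.eq_swap
        · exact absurd rfl hxy
  intro f hf f' hf' hmap
  induction f using Sym2.ind with | _ x y =>
  induction f' using Sym2.ind with | _ x' y' =>
  rw [Sym2.map_pair_eq, Sym2.map_pair_eq, Sym2.eq_iff] at hmap
  rcases hmap with ⟨hx, hy⟩ | ⟨hx, hy⟩
  · exact key x y x' y' hf hf' hx hy
  · rw [show s(x', y') = s(y', x') from Sym2.eq_swap] at hf' ⊢
    exact key x y y' x' hf hf' hx hy

private lemma connected_down {V W : Type*} (q : V → W) (hq : Surjective q)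
    {T : SimpleGraph V} (hT : T.Connected) {T' : SimpleGraph W}
    (h : ∀ x y, T.Adj x y → q x = q y ∨ T'.Adj (q x) (q y)) : T'.Connected := by
  haveI : Nonempty V := hT.nonempty
  haveI : Nonempty W := Nonempty.map q ‹_›
  have key : ∀ {x y : V} (_ : T.Walk x y), T'.Reachable (q x) (q y) := by
    intro x y p
    induction p with
    | nil => exact Reachable.refl _
    | @cons c c' d hadj p ih =>
      rcases h _ _ hadj with heq | hadj'
      · rwa [heq]
      · exact hadj'.reachable.trans ih
  refine Connected.mk fun c d => ?_
  obtain ⟨x, rfl⟩ := hq c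
  obtain ⟨y, rfl⟩ := hq d
  exact key (hT.preconnected x y).some

private lemma connected_up (huv : u ≠ v) (hq : Surjective q)
    (hinj : ∀ x y : Fin (n + 1), q x = q y → x = y ∨ s(x, y) = s(u, v))
    {T' : SimpleGraph (Fin n)} (hT' : T'.Connected)
    {G : SimpleGraph (Fin (n + 1))} (huvG : G.Adj u v)
    (hlift : ∀ c d, T'.Adj c d → ∃ x y, G.Adj x y ∧ q x = c ∧ q y = d) :
    G.Connected := by
  have hfib : ∀ x y : Fin (n + 1), q x = q y → G.Reachable x y := by
    intro x y hxy
    rcases hinj _ _ hxy with rfl | huv'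
    · exact Reachable.refl _
    · rcases Sym2.eq_iff.mp huv' with ⟨rfl, rfl⟩ | ⟨rfl, rfl⟩
      · exact huvG.reachable
      · exact huvG.symm.reachable
  have key : ∀ {c d : Fin n} (_ : T'.Walk c d) (x y : Fin (n + 1)),
      q x = c → q y = d → G.Reachable x y := by
    intro c d p
    induction p with
    | nil => intro x y hx hy; exact hfib x y (hx.trans hy.symm)
    | @cons c c' d hadj p ih =>
      intro x y hx hy
      obtain ⟨x', y', hadj', hx', hy'⟩ := hlift _ _ hadj
      exact ((hfib x x' (by rw [hx, hx'])).trans hadj'.reachable).trans (ih y' y hy' hy)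
  refine Connected.mk fun x y => ?_
  exact key (hT'.preconnected (q x) (q y)).some x y rfl rfl

end
/-- edge finset of a graph on a Fin type -/
private noncomputable def Efin {m : ℕ} (T : SimpleGraph (Fin m)) : Finset (Sym2 (Fin m)) :=
  T.edgeSet.toFinite.toFinset

private lemma mem_Efin {m : ℕ} {T : SimpleGraph (Fin m)} {g : Sym2 (Fin m)} :
    g ∈ Efin T ↔ g ∈ T.edgeSet := Set.Finite.mem_toFinset _

/-- finset of lifts of an edge -/
private noncomputable def Lfin {n : ℕ} (u v : Fin (n+1)) (q : Fin (n+1) → Fin n)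
    (g : Sym2 (Fin n)) : Finset (Sym2 (Fin (n+1))) :=
  {f : Sym2 (Fin (n + 1)) | ¬ f.IsDiag ∧ f ≠ s(u, v) ∧ Sym2.map q f = g}.toFinite.toFinset

private lemma mem_Lfin {n : ℕ} {u v : Fin (n+1)} {q : Fin (n+1) → Fin n}
    {g : Sym2 (Fin n)} {f : Sym2 (Fin (n+1))} :
    f ∈ Lfin u v q g ↔ ¬ f.IsDiag ∧ f ≠ s(u, v) ∧ Sym2.map q f = g :=
  Set.Finite.mem_toFinset _

theorem forestedForm_pushforward_eq_sum_over_trees_containing_edge {A : Type*} [CommRing A]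
    (n : ℕ) (hn : 1 ≤ n)
    (u v : Fin (n + 1)) (huv : u ≠ v)
    (q : Fin (n + 1) → Fin n) (hq : Function.Surjective q) (hquv : q u = q v)
    (hinj : ∀ x y : Fin (n + 1), q x = q y → x = y ∨ s(x, y) = s(u, v))
    (a : Sym2 (Fin (n + 1)) → A) :
    forestedForm n (pushforward q s(u, v) a) =
      ∑ᶠ T ∈ {T : SimpleGraph (Fin (n + 1)) | T.IsTree ∧ s(u, v) ∈ T.edgeSet},
        (treeProd T (a + edgeIndicator s(u, v)) - treeProd T a) := by
  classical
  have he₀diag : ¬ (s(u, v) : Sym2 (Fin (n+1))).IsDiag := by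
    simp [Sym2.mk_isDiag_iff, huv]
  -- Step 1 : rewrite the RHS
  have hRHS : (∑ᶠ T ∈ {T : SimpleGraph (Fin (n + 1)) | T.IsTree ∧ s(u, v) ∈ T.edgeSet},
        (treeProd T (a + edgeIndicator s(u, v)) - treeProd T a))
      = ∑ T ∈ ({T : SimpleGraph (Fin (n + 1)) | T.IsTree ∧ s(u, v) ∈ T.edgeSet}.toFinite.toFinset),
          ∏ f ∈ (Efin T).erase s(u, v), a f := by
    rw [finsum_mem_eq_finite_toFinset_sum _ (Set.toFinite _)]
    refine Finset.sum_congr rfl fun T hT => ?_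
    rw [Set.Finite.mem_toFinset] at hT
    obtain ⟨htree, he⟩ := hT
    have heE : s(u, v) ∈ Efin T := mem_Efin.mpr he
    set b : Sym2 (Fin (n+1)) → A := a + edgeIndicator s(u, v) with hb
    simp only [treeProd]
    rw [finprod_mem_eq_finite_toFinset_prod _ (Set.toFinite _),
      finprod_mem_eq_finite_toFinset_prod _ (Set.toFinite _)]
    rw [show T.edgeSet.toFinite.toFinset = Efin T from rfl,
      ← Finset.mul_prod_erase (Efin T) b heE,
      ← Finset.mul_prod_erase (Efin T) a heE]
    have h1 : ∀ f ∈ (Efin T).erase s(u, v), b f = a f := by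
      intro f hf
      have hne := Finset.ne_of_mem_erase hf
      simp [hb, edgeIndicator, hne, Pi.add_apply]
    rw [Finset.prod_congr rfl h1]
    have h2 : b s(u, v) = a s(u, v) + 1 := by
      simp [hb, edgeIndicator, Pi.add_apply]
    rw [h2]
    ring
  -- Step 2 : rewrite the LHS
  have hLHS : forestedForm n (pushforward q s(u, v) a)
      = ∑ T' ∈ ({T' : SimpleGraph (Fin n) | T'.IsTree}.toFinite.toFinset),
          ∑ p ∈ (Efin T').pi (fun g => Lfin u v q g),
            ∏ x ∈ (Efin T').attach, a (p x.1 x.2) := by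
    have h0 : forestedForm n (pushforward q s(u, v) a)
        = ∑ᶠ T' ∈ {T' : SimpleGraph (Fin n) | T'.IsTree}, treeProd T' (pushforward q s(u, v) a) := rfl
    rw [h0, finsum_mem_eq_finite_toFinset_sum _ (Set.toFinite _)]
    refine Finset.sum_congr rfl fun T' _ => ?_
    have h1 : treeProd T' (pushforward q s(u, v) a)
        = ∏ g ∈ Efin T', ∑ f ∈ Lfin u v q g, a f := by
      simp only [treeProd]
      rw [finprod_mem_eq_finite_toFinset_prod _ (Set.toFinite _)]
      refine Finset.prod_congr rfl fun g _ => ?_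
      simp only [pushforward]
      rw [finsum_mem_eq_finite_toFinset_sum _ (Set.toFinite _)]
      rfl
    rw [h1, Finset.prod_sum]
  rw [hLHS, hRHS, Finset.sum_sigma']
  have hsplit : ∀ f : Sym2 (Fin (n + 1)), ∃ p p', f = s(p, p') :=
    fun f => Sym2.ind (fun p p' => ⟨p, p', rfl⟩) f
  set SIG := ({T' : SimpleGraph (Fin n) | T'.IsTree}.toFinite.toFinset).sigma
      (fun T' => (Efin T').pi fun g => Lfin u v q g) with hSIGdef
  set img : (Σ T' : SimpleGraph (Fin n), ∀ g ∈ Efin T', Sym2 (Fin (n + 1))) →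
      Finset (Sym2 (Fin (n + 1))) :=
    fun x => (Efin x.1).attach.image fun g => x.2 g.1 g.2 with himgdef
  have hfact : ∀ x ∈ SIG, x.1.IsTree ∧ ∀ (g) (hg : g ∈ Efin x.1),
      ¬ (x.2 g hg).IsDiag ∧ x.2 g hg ≠ s(u, v) ∧ Sym2.map q (x.2 g hg) = g := by
    intro x hx
    rw [hSIGdef, Finset.mem_sigma] at hx
    exact ⟨(Set.Finite.mem_toFinset _).mp hx.1,
      fun g hg => mem_Lfin.mp (Finset.mem_pi.mp hx.2 g hg)⟩
  have hES : ∀ x ∈ SIG, (SimpleGraph.fromEdgeSet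
      (↑(insert s(u, v) (img x)) : Set (Sym2 (Fin (n + 1))))).edgeSet
      = ↑(insert s(u, v) (img x)) := by
    intro x hx
    rw [edgeSet_fromEdgeSet, sdiff_eq_left, Set.disjoint_left]
    intro f hf
    simp only [Finset.coe_insert, Set.mem_insert_iff, Finset.mem_coe, himgdef,
      Finset.mem_image, Finset.mem_attach, true_and] at hf
    rcases hf with rfl | ⟨y, hy⟩
    · exact he₀diag
    · rw [← hy]; exact ((hfact x hx).2 y.1 y.2).1
  have he0img : ∀ x ∈ SIG, s(u, v) ∉ img x := by
    intro x hx h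
    obtain ⟨y, _, hy⟩ := Finset.mem_image.mp h
    exact ((hfact x hx).2 y.1 y.2).2.1 hy
  have hinjatt : ∀ x ∈ SIG, Set.InjOn (fun y : {g // g ∈ Efin x.1} => x.2 y.1 y.2) ↑(Efin x.1).attach := by
    intro x hx y _ y' _ h
    have h2 := congrArg (Sym2.map q) h
    simp only [((hfact x hx).2 y.1 y.2).2.2, ((hfact x hx).2 y'.1 y'.2).2.2] at h2
    exact Subtype.ext h2
  have himgq : ∀ x ∈ SIG, (img x).image (Sym2.map q) = Efin x.1 := by
    intro x hx
    rw [himgdef]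
    simp only
    rw [Finset.image_image,
      Finset.image_congr (g := fun y => y.1) (fun y _ => ((hfact x hx).2 y.1 y.2).2.2),
      Finset.attach_image_val]
  have hcard : ∀ x ∈ SIG, (insert s(u, v) (img x)).card = n := by
    intro x hx
    rw [Finset.card_insert_of_notMem (he0img x hx), himgdef]
    simp only
    rw [Finset.card_image_of_injOn (hinjatt x hx), Finset.card_attach]
    have ht := ncard_of_isTree (hfact x hx).1
    rw [Fintype.card_fin] at ht
    have ht2 : (Efin x.1).card = x.1.edgeSet.ncard := (Set.ncard_eq_toFinset_card _ _).symm
    omega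
  have htreeF : ∀ x ∈ SIG, (SimpleGraph.fromEdgeSet
        (↑(insert s(u, v) (img x)) : Set (Sym2 (Fin (n + 1))))).IsTree ∧
      s(u, v) ∈ (SimpleGraph.fromEdgeSet
        (↑(insert s(u, v) (img x)) : Set (Sym2 (Fin (n + 1))))).edgeSet := by
    intro x hx
    have hesx := hES x hx
    have hmemuv : s(u, v) ∈ (SimpleGraph.fromEdgeSet
        (↑(insert s(u, v) (img x)) : Set (Sym2 (Fin (n + 1))))).edgeSet := by
      rw [hesx]
      exact Finset.mem_coe.mpr (Finset.mem_insert_self _ _)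
    have hlift : ∀ c d, x.1.Adj c d → ∃ p p',
        (SimpleGraph.fromEdgeSet
          (↑(insert s(u, v) (img x)) : Set (Sym2 (Fin (n + 1))))).Adj p p' ∧
        q p = c ∧ q p' = d := by
      intro c d hcd
      have hg : s(c, d) ∈ Efin x.1 := mem_Efin.mpr (x.1.mem_edgeSet.mpr hcd)
      obtain ⟨p, p', hpp⟩ := hsplit (x.2 s(c, d) hg)
      have hf : x.2 s(c, d) hg ∈ (SimpleGraph.fromEdgeSet
          (↑(insert s(u, v) (img x)) : Set (Sym2 (Fin (n + 1))))).edgeSet := by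
        rw [hesx]
        refine Finset.mem_coe.mpr (Finset.mem_insert.mpr (Or.inr ?_))
        exact Finset.mem_image.mpr ⟨⟨s(c, d), hg⟩, Finset.mem_attach _ _, rfl⟩
      have hmap := ((hfact x hx).2 s(c, d) hg).2.2
      rw [hpp] at hf hmap
      rw [Sym2.map_pair_eq, Sym2.eq_iff] at hmap
      have hadj := (SimpleGraph.fromEdgeSet
          (↑(insert s(u, v) (img x)) : Set (Sym2 (Fin (n + 1))))).mem_edgeSet.mp hf
      rcases hmap with ⟨hc, hd⟩ | ⟨hc, hd⟩
      · exact ⟨p, p', hadj, hc, hd⟩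
      · exact ⟨p', p, hadj.symm, hd, hc⟩
    have hconn := connected_up huv hq hinj (hfact x hx).1.isConnected
      ((SimpleGraph.fromEdgeSet _).mem_edgeSet.mp hmemuv) hlift
    have hcnt : (SimpleGraph.fromEdgeSet
        (↑(insert s(u, v) (img x)) : Set (Sym2 (Fin (n + 1))))).edgeSet.ncard + 1
        = Fintype.card (Fin (n + 1)) := by
      rw [hesx, Set.ncard_coe_finset, hcard x hx, Fintype.card_fin]
    exact ⟨isTree_of_conn_card hconn hcnt, hmemuv⟩
  refine Finset.sum_bij (fun x _ => SimpleGraph.fromEdgeSet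
      (↑(insert s(u, v) (img x)) : Set (Sym2 (Fin (n + 1))))) ?_ ?_ ?_ ?_
  · -- maps into the tree finset
    intro x hx
    exact (Set.Finite.mem_toFinset _).mpr (htreeF x hx)
  · -- injectivity
    intro x hx x' hx' heq
    have heq' : SimpleGraph.fromEdgeSet (↑(insert s(u, v) (img x)) : Set (Sym2 (Fin (n + 1))))
        = SimpleGraph.fromEdgeSet (↑(insert s(u, v) (img x')) : Set (Sym2 (Fin (n + 1)))) := heq
    have h1 : insert s(u, v) (img x) = insert s(u, v) (img x') :=
      Finset.coe_injective (by rw [← hES x hx, ← hES x' hx', heq'])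
    have h2 : img x = img x' := by
      have h3 := congrArg (fun s => Finset.erase s s(u, v)) h1
      simpa only [Finset.erase_insert (he0img x hx), Finset.erase_insert (he0img x' hx')]
        using h3
    have h3 : x.1 = x'.1 := by
      have h4 := congrArg (Finset.image (Sym2.map q)) h2
      rw [himgq x hx, himgq x' hx'] at h4
      have h5 : x.1.edgeSet = x'.1.edgeSet := by
        rw [← Set.Finite.coe_toFinset x.1.edgeSet.toFinite,
          ← Set.Finite.coe_toFinset x'.1.edgeSet.toFinite]
        exact congrArg _ h4
      exact edgeSet_inj.mp h5
    obtain ⟨T1, φ1⟩ := x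
    obtain ⟨T2, φ2⟩ := x'
    simp only at h3
    subst h3
    have hφ : φ1 = φ2 := by
      funext g hg
      have hmem1 : φ1 g hg ∈ img ⟨T1, φ1⟩ :=
        Finset.mem_image.mpr ⟨⟨g, hg⟩, Finset.mem_attach _ _, rfl⟩
      rw [h2] at hmem1
      obtain ⟨y, _, hy⟩ := Finset.mem_image.mp hmem1
      have h6 := congrArg (Sym2.map q) hy
      rw [((hfact _ hx').2 y.1 y.2).2.2, ((hfact _ hx).2 g hg).2.2] at h6
      subst h6
      rw [← hy]
    rw [hφ]
  · -- surjectivity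
    intro T hT
    rw [Set.Finite.mem_toFinset] at hT
    obtain ⟨htree, he⟩ := hT
    have hInj := map_injOn huv hinj htree.IsAcyclic he
    have hdiag2 : ∀ f ∈ T.edgeSet \ {s(u, v)}, ¬ (Sym2.map q f).IsDiag := by
      intro f hf
      obtain ⟨p, p', rfl⟩ := hsplit f
      rw [Sym2.map_pair_eq, Sym2.mk_isDiag_iff]
      intro hqq
      rcases hinj _ _ hqq with rfl | h
      · exact (T.mem_edgeSet.mp hf.1).ne rfl
      · exact hf.2 h
    have hesT' : (SimpleGraph.fromEdgeSet (Sym2.map q '' (T.edgeSet \ {s(u, v)}))).edgeSet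
        = Sym2.map q '' (T.edgeSet \ {s(u, v)}) := by
      rw [edgeSet_fromEdgeSet, sdiff_eq_left, Set.disjoint_left]
      rintro f ⟨f₀, hf₀, rfl⟩ hd
      exact hdiag2 f₀ hf₀ hd
    have hconn' : (SimpleGraph.fromEdgeSet (Sym2.map q '' (T.edgeSet \ {s(u, v)}))).Connected := by
      refine connected_down q hq htree.isConnected ?_
      intro x y hxy
      by_cases hcase : s(x, y) = s(u, v)
      · left
        rcases Sym2.eq_iff.mp hcase with ⟨rfl, rfl⟩ | ⟨rfl, rfl⟩
        · exact hquv
        · exact hquv.symm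
      · right
        rw [← SimpleGraph.mem_edgeSet, hesT']
        exact ⟨s(x, y), ⟨T.mem_edgeSet.mpr hxy, hcase⟩, Sym2.map_pair_eq q x y⟩
    have hncT : T.edgeSet.ncard = n := by
      have := ncard_of_isTree htree
      rw [Fintype.card_fin] at this
      omega
    have hncT' : (SimpleGraph.fromEdgeSet
        (Sym2.map q '' (T.edgeSet \ {s(u, v)}))).edgeSet.ncard + 1 = Fintype.card (Fin n) := by
      rw [hesT', Set.ncard_image_of_injOn hInj, Set.ncard_diff_singleton_of_mem he,
        Fintype.card_fin, hncT]
      omega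
    have htree' : (SimpleGraph.fromEdgeSet
        (Sym2.map q '' (T.edgeSet \ {s(u, v)}))).IsTree := isTree_of_conn_card hconn' hncT'
    have hex : ∀ g ∈ Efin (SimpleGraph.fromEdgeSet (Sym2.map q '' (T.edgeSet \ {s(u, v)}))),
        ∃ f, (f ∈ T.edgeSet ∧ f ≠ s(u, v)) ∧ Sym2.map q f = g := by
      intro g hg
      rw [mem_Efin, hesT'] at hg
      obtain ⟨f, hf, rfl⟩ := hg
      exact ⟨f, ⟨hf.1, hf.2⟩, rfl⟩
    choose φ hφ1 hφ2 using hex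
    have hxmem : (⟨SimpleGraph.fromEdgeSet (Sym2.map q '' (T.edgeSet \ {s(u, v)})), φ⟩ :
        Σ T' : SimpleGraph (Fin n), ∀ g ∈ Efin T', Sym2 (Fin (n + 1))) ∈ SIG := by
      rw [hSIGdef, Finset.mem_sigma]
      constructor
      · exact (Set.Finite.mem_toFinset _).mpr htree'
      · rw [Finset.mem_pi]
        intro g hg
        rw [mem_Lfin]
        exact ⟨T.not_isDiag_of_mem_edgeSet (hφ1 g hg).1, (hφ1 g hg).2, hφ2 g hg⟩
    refine ⟨_, hxmem, ?_⟩
    have hset : (↑(insert s(u, v)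
        (img ⟨SimpleGraph.fromEdgeSet (Sym2.map q '' (T.edgeSet \ {s(u, v)})), φ⟩)) :
        Set (Sym2 (Fin (n + 1)))) = T.edgeSet := by
      ext f
      simp only [Finset.coe_insert, Set.mem_insert_iff, Finset.mem_coe, himgdef,
        Finset.mem_image, Finset.mem_attach, true_and]
      constructor
      · rintro (rfl | ⟨y, hy⟩)
        · exact he
        · rw [← hy]
          exact (hφ1 y.1 y.2).1
      · intro hf
        by_cases hfe : f = s(u, v)
        · exact Or.inl hfe
        · right
          have hgmem : Sym2.map q f ∈
              Efin (SimpleGraph.fromEdgeSet (Sym2.map q '' (T.edgeSet \ {s(u, v)}))) := by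
            rw [mem_Efin, hesT']
            exact ⟨f, ⟨hf, hfe⟩, rfl⟩
          refine ⟨⟨Sym2.map q f, hgmem⟩, ?_⟩
          have h1 : φ _ hgmem ∈ T.edgeSet \ {s(u, v)} := ⟨(hφ1 _ hgmem).1, (hφ1 _ hgmem).2⟩
          have h2 : f ∈ T.edgeSet \ {s(u, v)} := ⟨hf, hfe⟩
          exact hInj h1 h2 (hφ2 _ hgmem)
    show SimpleGraph.fromEdgeSet _ = T
    rw [hset, SimpleGraph.fromEdgeSet_edgeSet]
  · -- values agree
    intro x hx
    show _ = ∏ f ∈ (Efin (SimpleGraph.fromEdgeSet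
        (↑(insert s(u, v) (img x)) : Set (Sym2 (Fin (n + 1)))))).erase s(u, v), a f
    have hEF : Efin (SimpleGraph.fromEdgeSet
        (↑(insert s(u, v) (img x)) : Set (Sym2 (Fin (n + 1))))) = insert s(u, v) (img x) := by
      ext f
      rw [mem_Efin, hES x hx]
      exact Finset.mem_coe
    rw [hEF, Finset.erase_insert (he0img x hx), himgdef]
    simp only
    rw [Finset.prod_image (fun y hy y' hy' h => hinjatt x hx hy hy' h)]
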